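/- Let n be an even positive integer, x ∈ ℤ^n, and let c ∈ [-1:1]^n be a nonzero vector with c · x = 0 that has minimal support: every nonzero c' ∈ [-1:1]^n with c' · x = 0 satisfies #{i : c'_i ≠ 0} ≥ #{i : c_i ≠ 0}. Let π be the solution profile of c and assume π(0) ≤ n/3 and π(1) = π(−1). Let e be an integer with 0 ≤ e < n/12, and define the good solution pairs G(c) as the pairs (a, b) ∈ [0:2]^n × [0:2]^n with #a^{−1}(1) = #b^{−1}(1) = n/2, #a^{−1}(2) = #b^{−1}(2) = e, a − b = c, and (a_i, b_i) ∈ {(0,0),(1,1)} whenever c_i = 0. Then for any two distinct good solution pairs (a, b), (a', b') ∈ G(c), we have a · x ≠ a' · x. -/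
import Mathlib


/-- Perfect Mixing Dichotomy for Equal Subset Sum: for a minimal-support
solution c with π(0) ≤ n/3 and π(1) = π(−1), and 0 ≤ e < n/12, any two
distinct good solution pairs have different dot products with x. -/
theorem stmt_8 (n : ℕ) (hn : 0 < n) (hneven : Even n)
    (x c : Fin n → ℤ) (hc : ∀ i, c i ∈ Finset.Icc (-1 : ℤ) 1)
    (hc0 : c ≠ 0) (hcx : ∑ i, c i * x i = 0)
    (hmin : ∀ c' : Fin n → ℤ, (∀ i, c' i ∈ Finset.Icc (-1 : ℤ) 1) → c' ≠ 0 →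
      (∑ i, c' i * x i = 0) →
      (Finset.univ.filter fun i => c i ≠ 0).card ≤
        (Finset.univ.filter fun i => c' i ≠ 0).card)
    (π : ℤ → ℕ) (hπ : ∀ z, π z = (Finset.univ.filter fun i => c i = z).card)
    (hπ0 : (π 0 : ℝ) ≤ (n : ℝ) / 3) (hbal : π 1 = π (-1))
    (e : ℕ) (he : (e : ℝ) < (n : ℝ) / 12)
    (a b a' b' : Fin n → ℤ)
    (haIcc : ∀ i, a i ∈ Finset.Icc (0 : ℤ) 2)
    (hbIcc : ∀ i, b i ∈ Finset.Icc (0 : ℤ) 2)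
    (ha1 : (Finset.univ.filter fun i => a i = 1).card = n / 2)
    (hb1 : (Finset.univ.filter fun i => b i = 1).card = n / 2)
    (ha2 : (Finset.univ.filter fun i => a i = 2).card = e)
    (hb2 : (Finset.univ.filter fun i => b i = 2).card = e)
    (hab : a - b = c)
    (h0 : ∀ i, c i = 0 → (a i = 0 ∧ b i = 0) ∨ (a i = 1 ∧ b i = 1))
    (haIcc' : ∀ i, a' i ∈ Finset.Icc (0 : ℤ) 2)
    (hbIcc' : ∀ i, b' i ∈ Finset.Icc (0 : ℤ) 2)
    (ha1' : (Finset.univ.filter fun i => a' i = 1).card = n / 2)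
    (hb1' : (Finset.univ.filter fun i => b' i = 1).card = n / 2)
    (ha2' : (Finset.univ.filter fun i => a' i = 2).card = e)
    (hb2' : (Finset.univ.filter fun i => b' i = 2).card = e)
    (hab' : a' - b' = c)
    (h0' : ∀ i, c i = 0 → (a' i = 0 ∧ b' i = 0) ∨ (a' i = 1 ∧ b' i = 1))
    (hpairne : (a, b) ≠ (a', b')) :
    ∑ i, a i * x i ≠ ∑ i, a' i * x i := by
  intro heq
  -- the difference vector
  set d : Fin n → ℤ := fun i => a i - a' i with hd
  have hbdef : ∀ i, b i = a i - c i := by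
    intro i; have := congrFun hab i; simp only [Pi.sub_apply] at this; omega
  have hbdef' : ∀ i, b' i = a' i - c i := by
    intro i; have := congrFun hab' i; simp only [Pi.sub_apply] at this; omega
  -- d has entries in [-1,1]
  have hdIcc : ∀ i, d i ∈ Finset.Icc (-1 : ℤ) 1 := by
    intro i
    have h1 := haIcc i; have h2 := haIcc' i
    have h3 := hbIcc i; have h4 := hbIcc' i
    have h5 := hc i
    simp only [Finset.mem_Icc] at h1 h2 h3 h4 h5 ⊢
    rw [hbdef i] at h3; rw [hbdef' i] at h4
    by_cases hci : c i = 0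
    · rcases h0 i hci with ⟨ha, _⟩ | ⟨ha, _⟩ <;>
        rcases h0' i hci with ⟨ha', _⟩ | ⟨ha', _⟩ <;>
        simp only [hd] <;> omega
    · simp only [hd]; omega
  -- d is nonzero
  have hdne : d ≠ 0 := by
    intro h
    apply hpairne
    have haa : a = a' := by
      funext i
      have := congrFun h i
      simpa [hd, sub_eq_zero] using this
    have hbb : b = b' := by
      funext i; rw [hbdef i, hbdef' i, haa]
    rw [haa, hbb]
  -- d · x = 0
  have hdx : ∑ i, d i * x i = 0 := by
    have : ∑ i, d i * x i = ∑ i, a i * x i - ∑ i, a' i * x i := by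
      rw [← Finset.sum_sub_distrib]
      exact Finset.sum_congr rfl fun i _ => by simp [hd, sub_mul]
    rw [this, heq, sub_self]
  have hkey := hmin d hdIcc hdne hdx
  -- support of d is contained in a small union
  have hsub : (Finset.univ.filter fun i => d i ≠ 0) ⊆
      ((Finset.univ.filter fun i => c i = 0) ∪
       (Finset.univ.filter fun i => a i = 2) ∪
       (Finset.univ.filter fun i => a' i = 2) ∪
       (Finset.univ.filter fun i => b i = 2) ∪
       (Finset.univ.filter fun i => b' i = 2)) := by
    intro i hi
    simp only [Finset.mem_filter, Finset.mem_univ, true_and, Finset.mem_union] at hi ⊢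
    have h1 := haIcc i; have h2 := haIcc' i
    have h3 := hbIcc i; have h4 := hbIcc' i
    have h5 := hc i
    simp only [Finset.mem_Icc] at h1 h2 h3 h4 h5
    have hb3 := hbdef i; have hb4 := hbdef' i
    simp only [hd] at hi
    omega
  have hcard : (Finset.univ.filter fun i => d i ≠ 0).card ≤ π 0 + e + e + e + e := by
    calc (Finset.univ.filter fun i => d i ≠ 0).card
        ≤ _ := Finset.card_le_card hsub
      _ ≤ _ := by
          refine le_trans (Finset.card_union_le _ _) ?_
          refine add_le_add ?_ (le_of_eq hb2')
          refine le_trans (Finset.card_union_le _ _) ?_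
          refine add_le_add ?_ (le_of_eq hb2)
          refine le_trans (Finset.card_union_le _ _) ?_
          refine add_le_add ?_ (le_of_eq ha2')
          refine le_trans (Finset.card_union_le _ _) ?_
          exact add_le_add (le_of_eq (hπ 0).symm) (le_of_eq ha2)
  -- support of c has size n - π 0
  have hcsplit : (Finset.univ.filter fun i => c i = 0).card +
      (Finset.univ.filter fun i => c i ≠ 0).card = n := by
    have h := Finset.card_filter_add_card_filter_not
      (s := (Finset.univ : Finset (Fin n))) (p := fun i => c i = 0)
    simp only [Finset.card_univ, Fintype.card_fin] at h
    convert h using 3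
  have hπ0' : π 0 = (Finset.univ.filter fun i => c i = 0).card := hπ 0
  -- numeric bounds from the real hypotheses
  have h3π : 3 * π 0 ≤ n := by
    have : (3 * π 0 : ℝ) ≤ (n : ℝ) := by linarith
    exact_mod_cast this
  have h12e : 12 * e < n := by
    have : (12 * e : ℝ) < (n : ℝ) := by linarith
    exact_mod_cast this
  omega
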